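/- For every pair of infinite regular cardinals λ < κ with λ⁺ < κ and every stationary S ⊆ E^κ_λ, there is a C-sequence ⟨C_δ : δ ∈ S⟩ such that for every club D ⊆ κ, the set {δ ∈ S : C_δ ⊆ D} is stationary in κ. -/

import Mathlib

open Set Ordinal

noncomputable section

abbrev O : Type 1 := Ordinal.{0}

/-- `ssup A` is the strict supremum of a set of ordinals. -/
def ssup (A : Set O) : O := sSup ((· + 1) '' A)

/-- `acc⁺(A)`: accumulation points below the strict sup. -/
def accP (A : Set O) : Set O := {α | α < ssup A ∧ 0 < α ∧ sSup (A ∩ Iio α) = α}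

def accOf (A : Set O) : Set O := A ∩ accP A

def nacc (A : Set O) : Set O := A \ accOf A

def clOf (A : Set O) : Set O := A ∪ accP A

/-- order type of a set of ordinals -/
def otp (A : Set O) : Ordinal.{1} := Ordinal.type (Subrel ((· < ·) : O → O → Prop) (· ∈ A))

/-- lift a small ordinal one universe up -/
def olift (a : O) : Ordinal.{1} := Ordinal.lift.{1} a

/-- `suc_σ(A)`: elements of `A` whose index in `A` is `j+1` for some `j < σ`. -/
def sucSet (σ : Ordinal.{1}) (A : Set O) : Set O := {β | β ∈ A ∧ ∃ j < σ, otp (A ∩ Iio β) = j + 1}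

def UnbIn (A : Set O) (δ : O) : Prop := ∀ α < δ, ∃ β ∈ A, α < β ∧ β < δ

def IsClubIn (C : Set O) (δ : O) : Prop :=
  C ⊆ Iio δ ∧ UnbIn C δ ∧ ∀ α < δ, 0 < α → sSup (C ∩ Iio α) = α → α ∈ C

def IsStatIn (S : Set O) (δ : O) : Prop :=
  S ⊆ Iio δ ∧ ∀ D, IsClubIn D δ → (S ∩ D).Nonempty

def Ecof (κ : O) (lam : Cardinal.{0}) : Set O := {δ | δ < κ ∧ δ.cof = lam}

def PhiSup (B x : Set O) : Set O :=
  if sSup (x ∩ B) = sSup x then clOf (x ∩ B) else x \ Iio (sSup (x ∩ B))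

def PhiD (D x : Set O) : Set O :=
  if sSup (D ∩ Iio (sSup x)) = sSup x then
    {γ | ∃ η ∈ x, sInf D < η ∧ γ = sSup (D ∩ Iio η)}
  else x \ Iio (sSup (D ∩ Iio (sSup x)))

/-- `cf(δ)`-additive proper ideal on `δ` extending the bounded ideal. -/
def GoodIdeal (δ : O) (J : Set (Set O)) : Prop :=
  (∀ A B : Set O, A ⊆ B → B ∈ J → A ∈ J) ∧
  (Iio δ ∉ J) ∧
  (∀ B : Set O, B ⊆ Iio δ → sSup B < δ → B ∈ J) ∧
  (∀ ξ < (Ordinal.cof δ).ord, ∀ f : O → Set O, (∀ i < ξ, f i ∈ J) → (⋃ i ∈ Iio ξ, f i) ∈ J)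

namespace SCG

lemma bdd {A : Set O} {β : O} (h : A ⊆ Iio β) : BddAbove A :=
  ⟨β, fun _ hx => (h hx).le⟩

lemma sSup_le_of_forall {A : Set O} {β : O} (h : ∀ a ∈ A, a ≤ β) : sSup A ≤ β :=
  csSup_le' h

lemma exists_lt_mem {A : Set O} {x : O} (h : x < sSup A) : ∃ a ∈ A, x < a := by
  by_contra hc
  push_neg at hc
  exact absurd (sSup_le_of_forall hc) (not_le.2 h)

lemma lt_self_add_one (a : O) : a < a + 1 := by
  rw [Ordinal.add_one_eq_succ]; exact Order.lt_succ a

lemma add_one_lt_limit {δ a : O} (hδ : Order.IsSuccLimit δ) (h : a < δ) : a + 1 < δ := by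
  rw [Ordinal.add_one_eq_succ]; exact hδ.succ_lt h

lemma sSup_Iio {δ : O} (hδ : Order.IsSuccLimit δ) : sSup (Iio δ) = δ := by
  refine le_antisymm (sSup_le_of_forall fun a ha => le_of_lt ha) ?_
  refine le_of_forall_lt fun a ha => ?_
  calc a < a + 1 := lt_self_add_one a
  _ ≤ sSup (Iio δ) := le_csSup (bdd (fun x hx => hx)) (add_one_lt_limit hδ ha)

lemma clubIn_Iio {δ : O} (hδ : Order.IsSuccLimit δ) : IsClubIn (Iio δ) δ :=
  ⟨fun _ h => h, fun α hα => ⟨α + 1, add_one_lt_limit hδ hα, lt_self_add_one α, add_one_lt_limit hδ hα⟩,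
   fun α hα _ _ => hα⟩

/-- sup over an ordinal-indexed (small) family is bounded by regular cofinality -/
lemma sSup_image_lt {δ i : O} (hi : i.card < δ.cof) {g : O → O}
    (hg : ∀ j < i, g j < δ) : sSup (g '' Iio i) < δ := by
  have hδ : 0 < δ := by
    rcases lt_or_ge 0 i with h0 | h0
    · exact (zero_le).trans_lt (hg 0 h0)
    · have : i = 0 := le_antisymm h0 (zero_le)
      subst this
      simp only [Ordinal.card_zero] at hi
      by_contra h
      have : δ = 0 := le_antisymm (not_lt.1 h) (zero_le)
      rw [this, cof_zero] at hi
      exact absurd hi (lt_irrefl _)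
  have hb : Ordinal.bsup i (fun j _ => g j) < δ := Ordinal.bsup_lt_ord hi (fun j hj => hg j hj)
  refine lt_of_le_of_lt (sSup_le_of_forall ?_) hb
  rintro a ⟨j, hj, rfl⟩
  exact Ordinal.le_bsup _ j hj

lemma mem_of_sSup_inter {E : Set O} {κo β : O} (hE : IsClubIn E κo) (hβ : β < κo)
    (hne : (E ∩ Iio β).Nonempty) : sSup (E ∩ Iio β) ∈ E := by
  set s := sSup (E ∩ Iio β) with hs
  by_cases hmem : s ∈ E
  · exact hmem
  have hsβ : s ≤ β := sSup_le_of_forall fun a ha => (ha.2 : a < β).le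
  obtain ⟨e0, he0⟩ := hne
  have he0s : e0 ≤ s := le_csSup (bdd (fun x hx => hx.2)) he0
  have h0s : 0 < s := by
    rcases eq_or_lt_of_le (zero_le : (0:O) ≤ e0) with h | h
    · -- e0 = 0
      rcases eq_or_lt_of_le he0s with h2 | h2
      · exact absurd (h2 ▸ he0.1) hmem
      · exact lt_of_le_of_lt (zero_le : (0:O) ≤ e0) h2
    · exact lt_of_lt_of_le h he0s
  have hsup : sSup (E ∩ Iio s) = s := by
    refine le_antisymm (sSup_le_of_forall fun a ha => (ha.2 : a < s).le) ?_
    refine le_of_forall_lt fun x hx => ?_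
    obtain ⟨a, ha, hxa⟩ := exists_lt_mem (hs ▸ hx)
    have has : a ≤ s := le_csSup (bdd (fun y hy => hy.2)) ha
    have : a < s := lt_of_le_of_ne has (fun h => hmem (h ▸ ha.1))
    exact lt_of_lt_of_le hxa (le_csSup (bdd (β := s) (fun y (hy : y ∈ E ∩ Iio s) => hy.2)) ⟨ha.1, this⟩)
  exact hE.2.2 s (lt_of_le_of_lt hsβ hβ) h0s hsup

lemma unbIn_of_sSup {E : Set O} {δ : O} (h0 : 0 < δ) (h : sSup (E ∩ Iio δ) = δ) :
    UnbIn E δ := fun α hα => by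
  obtain ⟨a, ha, hαa⟩ := exists_lt_mem (h.symm ▸ hα)
  exact ⟨a, ha.1, hαa, ha.2⟩

lemma ssup_eq_of_club {E : Set O} {κo : O} (hκo : Order.IsSuccLimit κo) (hE : IsClubIn E κo) :
    ssup E = κo := by
  refine le_antisymm (sSup_le_of_forall ?_) (le_of_forall_lt fun x hx => ?_)
  · rintro a ⟨e, he, rfl⟩
    exact Order.add_one_le_iff.mpr (hE.1 he)
  · obtain ⟨e, he, hxe, heκ⟩ := hE.2.1 x hx
    have hb : BddAbove ((· + 1) '' E) := by
      refine ⟨κo, ?_⟩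
      rintro y ⟨z, hz, rfl⟩
      exact (add_one_lt_limit hκo (hE.1 hz)).le
    calc x < e + 1 := lt_of_lt_of_le hxe (lt_self_add_one e).le
    _ ≤ ssup E := le_csSup hb ⟨e, he, rfl⟩

lemma mem_accP_iff {E : Set O} {κo α : O} (hκo : Order.IsSuccLimit κo) (hE : IsClubIn E κo)
    (hα : α < κo) : α ∈ accP E ↔ 0 < α ∧ sSup (E ∩ Iio α) = α := by
  rw [accP, mem_setOf_eq, ssup_eq_of_club hκo hE]
  exact ⟨fun h => ⟨h.2.1, h.2.2⟩, fun h => ⟨hα, h.1, h.2⟩⟩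


lemma unb_aux {κo μ : O} (hκo : Order.IsSuccLimit κo) (hμ : μ.card < κo.cof) (hℵ : Cardinal.aleph0 < κo.cof)
    (E : O → Set O) (hE : ∀ j < μ, UnbIn (E j) κo) :
    ∀ α < κo, ∃ s, α < s ∧ s < κo ∧ 0 < s ∧ ∀ j < μ, sSup (E j ∩ Iio s) = s := by
  intro α hα
  classical
  set pick : O → O → O := fun j γ =>
    if h : γ < κo ∧ j < μ then (hE j h.2 γ h.1).choose else 0 with hpick
  have pick_spec : ∀ j γ, j < μ → γ < κo →
      pick j γ ∈ E j ∧ γ < pick j γ ∧ pick j γ < κo := by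
    intro j γ hj hγ
    have h : γ < κo ∧ j < μ := ⟨hγ, hj⟩
    simp only [hpick, dif_pos h]
    obtain ⟨h1, h2, h3⟩ := (hE j h.2 γ h.1).choose_spec
    exact ⟨h1, h2, h3⟩
  set H : O → O := fun γ => max (γ + 1) (sSup ((fun j => pick j γ) '' Iio μ)) with hH
  have hHκ : ∀ γ < κo, H γ < κo := by
    intro γ hγ
    refine max_lt (add_one_lt_limit hκo hγ) (sSup_image_lt hμ fun j hj => ?_)
    exact (pick_spec j γ hj hγ).2.2
  set β : ℕ → O := fun n => Nat.rec (α + 1) (fun _ ih => H ih) n with hβ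
  have hβκ : ∀ n, β n < κo := by
    intro n
    induction n with
    | zero => exact add_one_lt_limit hκo hα
    | succ n ih => exact hHκ _ ih
  have hβsucc : ∀ n, β n < β (n + 1) := by
    intro n
    calc β n < β n + 1 := lt_self_add_one _
    _ ≤ H (β n) := le_max_left _ _
  have hβmono : ∀ m n, m < n → β m < β n := by
    intro m n h
    induction n with
    | zero => exact absurd h (Nat.not_lt_zero m)
    | succ n ih =>
      rcases Nat.lt_succ_iff_lt_or_eq.1 h with h | h
      · exact (ih h).trans (hβsucc n)
      · exact h ▸ hβsucc n
  set s : O := ⨆ n, β n with hs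
  have hbr : BddAbove (range β) := ⟨κo, by rintro x ⟨n, rfl⟩; exact (hβκ n).le⟩
  have hβs : ∀ n, β n ≤ s := fun n => le_ciSup hbr n
  have hsκ : s < κo := by
    refine iSup_lt_ord ?_ hβκ
    rw [Cardinal.mk_nat]; exact hℵ
  have hαs : α < s := lt_of_lt_of_le (lt_self_add_one α) (hβs 0)
  have hlt : ∀ x < s, ∃ n, x < β n := by
    intro x hx
    by_contra hc
    push_neg at hc
    exact absurd (ciSup_le hc) (not_le.2 hx)
  have hpickle : ∀ j < μ, ∀ n, pick j (β n) ≤ β (n + 1) := by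
    intro j hj n
    refine le_trans (le_csSup ?_ (Set.mem_image_of_mem (fun i => pick i (β n)) (hj : j ∈ Iio μ))) (le_max_right _ _)
    exact ⟨κo, by rintro x ⟨i, hi, rfl⟩; exact (pick_spec i (β n) hi (hβκ n)).2.2.le⟩
  refine ⟨s, hαs, hsκ, lt_of_le_of_lt (zero_le : (0:O) ≤ α) hαs, fun j hj => ?_⟩
  have key : ∀ n, pick j (β n) ∈ E j ∩ Iio s := by
    intro n
    refine Set.mem_inter (pick_spec j (β n) hj (hβκ n)).1 ?_
    exact lt_of_le_of_lt (hpickle j hj n) (lt_of_lt_of_le (hβsucc (n+1)) (hβs (n+2)))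
  refine le_antisymm (sSup_le_of_forall fun a ha => (ha.2 : a < s).le) ?_
  refine le_of_forall_lt fun x hx => ?_
  obtain ⟨n, hn⟩ := hlt x hx
  have := (pick_spec j (β n) hj (hβκ n)).2.1
  calc x < pick j (β n) := lt_of_lt_of_le hn this.le
  _ ≤ sSup (E j ∩ Iio s) := le_csSup (bdd fun y hy => hy.2) (key n)

lemma clubIn_biInter {κo μ : O} (hκo : Order.IsSuccLimit κo) (hμ : μ.card < κo.cof) (hℵ : Cardinal.aleph0 < κo.cof)
    (E : O → Set O) (hE : ∀ j < μ, IsClubIn (E j) κo) :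
    IsClubIn (Iio κo ∩ ⋂ j ∈ Iio μ, E j) κo := by
  refine ⟨fun x hx => hx.1, ?_, ?_⟩
  · intro α hα
    obtain ⟨s, h1, h2, h3, h4⟩ := unb_aux hκo hμ hℵ E (fun j hj => (hE j hj).2.1) α hα
    refine ⟨s, ⟨h2, ?_⟩, h1, h2⟩
    exact mem_iInter₂.2 fun j hj => (hE j hj).2.2 s h2 h3 (h4 j hj)
  · intro α hα h0 hsup
    have hne : ((Iio κo ∩ ⋂ j ∈ Iio μ, E j) ∩ Iio α).Nonempty := by
      by_contra hc
      rw [not_nonempty_iff_eq_empty] at hc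
      rw [hc, csSup_empty] at hsup
      exact absurd hsup.symm (ne_of_gt h0)
    refine ⟨hα, mem_iInter₂.2 fun j hj => ?_⟩
    refine (hE j hj).2.2 α hα h0 ?_
    refine le_antisymm (sSup_le_of_forall fun a ha => (ha.2 : a < α).le) ?_
    refine le_of_forall_lt fun x hx => ?_
    obtain ⟨a, ha, hxa⟩ := exists_lt_mem (hsup.symm ▸ hx)
    have haE : a ∈ E j ∩ Iio α := ⟨mem_iInter₂.1 ha.1.2 j hj, ha.2⟩
    exact lt_of_lt_of_le hxa (le_csSup (bdd fun y hy => hy.2) haE)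

lemma clubIn_accP {κo : O} (hκo : Order.IsSuccLimit κo) (hℵ : Cardinal.aleph0 < κo.cof)
    {E : Set O} (hE : IsClubIn E κo) : IsClubIn (Iio κo ∩ accP E) κo := by
  have hssup : ssup E = κo := ssup_eq_of_club hκo hE
  have hμ : (1 : O).card < κo.cof := by
    rw [Ordinal.card_one]
    exact lt_of_lt_of_le Cardinal.one_lt_aleph0 hℵ.le
  refine ⟨fun x hx => hx.1, ?_, ?_⟩
  · intro α hα
    obtain ⟨s, h1, h2, h3, h4⟩ := unb_aux hκo hμ hℵ (fun _ => E) (fun j _ => hE.2.1) α hα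
    exact ⟨s, ⟨h2, hssup ▸ h2, h3, h4 0 zero_lt_one⟩, h1, h2⟩
  · intro α hα h0 hsup
    refine ⟨hα, hssup ▸ hα, h0, ?_⟩
    refine le_antisymm (sSup_le_of_forall fun a ha => (ha.2 : a < α).le) ?_
    refine le_of_forall_lt fun x hx => ?_
    obtain ⟨a, ha, hxa⟩ := exists_lt_mem (hsup.symm ▸ hx)
    have hacc : sSup (E ∩ Iio a) = a := ha.1.2.2.2
    obtain ⟨e, he, hxe⟩ := exists_lt_mem (A := E ∩ Iio a) (hacc.symm ▸ hxa)
    exact lt_of_lt_of_le hxe (le_csSup (bdd fun y hy => hy.2) (show e ∈ E ∩ Iio α from ⟨he.1, Set.mem_Iio.2 (lt_trans (Set.mem_Iio.1 he.2) (Set.mem_Iio.1 ha.2))⟩))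

def IsLadder (lam : Cardinal.{0}) (δ : O) (g : O → O) : Prop :=
  (∀ ξ < lam.ord, g ξ < δ) ∧ (∀ ξ ζ : O, ξ ≤ ζ → g ξ ≤ g ζ) ∧
  (∀ α < δ, ∃ ξ < lam.ord, α < g ξ) ∧ (∀ ξ : O, Order.IsSuccLimit ξ → g ξ = sSup (g '' Iio ξ))

lemma exists_ladder {lam : Cardinal.{0}} (hlam : lam.IsRegular) {δ : O}
    (hδcof : δ.cof = lam) : ∃ g : O → O, IsLadder lam δ g := by
  classical
  have hδlim : Order.IsSuccLimit δ := Ordinal.aleph0_le_cof.1 (hδcof ▸ hlam.aleph0_le)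
  obtain ⟨ι, f0, hlsub, hmk⟩ := Ordinal.exists_lsub_cof δ
  have hmk' : Cardinal.mk lam.ord.ToType = Cardinal.mk ι := by
    rw [Cardinal.mk_toType, Cardinal.card_ord, hmk, hδcof]
  obtain ⟨e⟩ := Cardinal.eq.1 hmk'
  set f : O → O := fun η =>
    if h : η < lam.ord then f0 (e ((ToType.mk (o := lam.ord)) ⟨η, h⟩)) else 0 with hf
  have hflt : ∀ η, f η < δ := by
    intro η
    simp only [hf]
    split
    · exact hlsub ▸ Ordinal.lt_lsub f0 _
    · exact hδlim.pos
  have hfcof : ∀ α < δ, ∃ η < lam.ord, α < f η := by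
    intro α hα
    have : ∃ i, α < f0 i := by
      by_contra hc
      push_neg at hc
      have : Ordinal.lsub f0 ≤ α + 1 :=
        Ordinal.lsub_le fun i => lt_of_le_of_lt (hc i) (lt_self_add_one α)
      rw [hlsub] at this
      exact absurd (lt_of_le_of_lt this (add_one_lt_limit hδlim hα)) (lt_irrefl δ)
    obtain ⟨i, hi⟩ := this
    set η : Iio lam.ord := (ToType.mk (o := lam.ord)).symm (e.symm i) with hη
    refine ⟨η.1, η.2, ?_⟩
    have hcomp : f η.1 = f0 i := by
      simp only [hf, dif_pos η.2, hη, Subtype.coe_eta, OrderIso.apply_symm_apply,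
        Equiv.apply_symm_apply]
      rw [dif_pos (show (((ToType.mk (o := lam.ord)).symm (e.symm i)).1 < lam.ord) from ((ToType.mk (o := lam.ord)).symm (e.symm i)).2)]; simp
    exact hcomp ▸ hi
  set g : O → O := fun ξ => sSup (f '' Iio ξ) with hg
  have hgbdd : ∀ ξ : O, BddAbove (f '' Iio ξ) :=
    fun ξ => ⟨δ, by rintro x ⟨η, _, rfl⟩; exact (hflt η).le⟩
  have hgmono : ∀ ξ ζ : O, ξ ≤ ζ → g ξ ≤ g ζ := by
    intro ξ ζ h
    rcases eq_or_ne ξ 0 with rfl | hne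
    · have hemp : Iio (0 : O) = ∅ :=
        Set.eq_empty_iff_forall_notMem.2 fun x hx => (zero_le : (0:O) ≤ x).not_gt hx
      simp only [hg]
      rw [hemp, Set.image_empty, csSup_empty]
      exact zero_le
    · have h0ξ : (0 : O) ∈ Iio ξ := pos_iff_ne_zero.2 hne
      exact csSup_le_csSup (hgbdd ζ) ⟨f 0, 0, h0ξ, rfl⟩
        (Set.image_mono (Set.Iio_subset_Iio h))
  have hfg : ∀ η : O, f η ≤ g (η + 1) :=
    fun η => le_csSup (hgbdd _) ⟨η, lt_self_add_one η, rfl⟩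
  refine ⟨g, ?_, hgmono, ?_, ?_⟩
  · -- bounded
    intro ξ hξ
    refine sSup_image_lt ?_ (fun j _ => hflt j)
    rw [hδcof]
    exact Cardinal.lt_ord.1 hξ
  · -- cofinal
    intro α hα
    obtain ⟨η, hη, hαη⟩ := hfcof α hα
    have hlim : Order.IsSuccLimit (lam.ord) := Cardinal.isSuccLimit_ord hlam.aleph0_le
    exact ⟨η + 1, add_one_lt_limit hlim hη, lt_of_lt_of_le hαη (hfg η)⟩
  · -- continuity
    intro ξ hξ
    refine le_antisymm (sSup_le_of_forall ?_) (sSup_le_of_forall ?_)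
    · rintro x ⟨η, hη, rfl⟩
      have h1 : η + 1 < ξ := add_one_lt_limit hξ hη
      have hb : BddAbove (g '' Iio ξ) :=
        ⟨g ξ, by rintro y ⟨ζ, hζ, rfl⟩; exact hgmono ζ ξ hζ.le⟩
      exact le_trans (hfg η) (le_csSup hb ⟨η + 1, h1, rfl⟩)
    · rintro x ⟨ζ, hζ, rfl⟩
      exact hgmono ζ ξ hζ.le

def drop (lam : Cardinal.{0}) (g : O → O) (E : Set O) : Set O :=
  {x | ∃ ξ < lam.ord, x = sSup (E ∩ Iio (g ξ)) ∧ 0 < x}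

lemma drop_subset_Iio {lam : Cardinal.{0}} {g : O → O} {E : Set O} {δ : O}
    (hlad : IsLadder lam δ g) : drop lam g E ⊆ Iio δ := by
  rintro x ⟨ξ, hξ, rfl, hx0⟩
  exact lt_of_le_of_lt (sSup_le_of_forall fun a ha => (ha.2 : a < g ξ).le) (hlad.1 ξ hξ)

lemma drop_subset {lam : Cardinal.{0}} {g : O → O} {E : Set O} {δ κo : O}
    (hE : IsClubIn E κo) (hlad : IsLadder lam δ g) (hδκ : δ < κo) :
    drop lam g E ⊆ E := by
  rintro x ⟨ξ, hξ, rfl, hx0⟩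
  have hne : (E ∩ Iio (g ξ)).Nonempty := by
    by_contra hc
    rw [not_nonempty_iff_eq_empty] at hc
    rw [hc, csSup_empty] at hx0
    exact absurd hx0 (lt_irrefl 0)
  exact mem_of_sSup_inter hE (lt_trans (hlad.1 ξ hξ) hδκ) hne

lemma drop_club {lam : Cardinal.{0}} {g : O → O} {E : Set O} {δ κo : O}
    (hE : IsClubIn E κo) (hlad : IsLadder lam δ g) (hδκ : δ < κo) (h0δ : 0 < δ)
    (hacc : sSup (E ∩ Iio δ) = δ) : IsClubIn (drop lam g E) δ := by
  refine ⟨drop_subset_Iio hlad, ?_, ?_⟩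
  · -- unbounded
    intro α hα
    obtain ⟨e, he, hαe, heδ⟩ := unbIn_of_sSup h0δ hacc α hα
    obtain ⟨ξ, hξ, heξ⟩ := hlad.2.2.1 e heδ
    set x := sSup (E ∩ Iio (g ξ)) with hx
    have hex : e ≤ x := le_csSup (bdd fun y hy => hy.2) ⟨he, heξ⟩
    have hx0 : 0 < x := lt_of_le_of_lt (zero_le : (0:O) ≤ α) (lt_of_lt_of_le hαe hex)
    have hxδ : x < δ :=
      lt_of_le_of_lt (sSup_le_of_forall fun a ha => (ha.2 : a < g ξ).le) (hlad.1 ξ hξ)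
    exact ⟨x, ⟨ξ, hξ, rfl, hx0⟩, lt_of_lt_of_le hαe hex, hxδ⟩
  · -- closed
    intro α hα h0α hs
    have hdsub : drop lam g E ⊆ E := drop_subset hE hlad hδκ
    have hne : (drop lam g E ∩ Iio α).Nonempty := by
      by_contra hc
      rw [not_nonempty_iff_eq_empty] at hc
      rw [hc, csSup_empty] at hs
      exact absurd hs.symm (ne_of_gt h0α)
    have hEα : sSup (E ∩ Iio α) = α := by
      refine le_antisymm (sSup_le_of_forall fun a ha => (ha.2 : a < α).le) ?_
      calc α = sSup (drop lam g E ∩ Iio α) := hs.symm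
      _ ≤ sSup (E ∩ Iio α) := csSup_le_csSup (bdd fun y hy => hy.2) hne
          (fun y hy => ⟨hdsub hy.1, hy.2⟩)
    have hEαne : (E ∩ Iio α).Nonempty := by
      by_contra hc
      rw [not_nonempty_iff_eq_empty] at hc
      rw [hc, csSup_empty] at hEα
      exact absurd hEα.symm (ne_of_gt h0α)
    set T : Set O := {ξ | ξ < lam.ord ∧ α ≤ g ξ} with hT
    have hTne : T.Nonempty := by
      obtain ⟨ξ, hξ, hαξ⟩ := hlad.2.2.1 α hα
      exact ⟨ξ, hξ, hαξ.le⟩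
    set ξs : O := Ordinal.lt_wf.min T hTne with hξs
    have hξsT : ξs ∈ T := Ordinal.lt_wf.min_mem T hTne
    have hleast : ∀ ζ < ξs, g ζ < α := by
      intro ζ hζ
      have hnot : ζ ∉ T := by
        intro hmem
        exact Ordinal.lt_wf.not_lt_min T hmem hζ
      rw [hT, mem_setOf_eq, not_and_or] at hnot
      rcases hnot with h | h
      · exact absurd (lt_trans hζ hξsT.1) h
      · exact not_le.1 h
    have hidx : ∀ y ∈ drop lam g E ∩ Iio α, ∀ ξ < lam.ord,
        y = sSup (E ∩ Iio (g ξ)) → ξ < ξs := by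
      rintro y ⟨hy, hyα⟩ ξ hξ hyeq
      by_contra hc
      push_neg at hc
      have hgξ : α ≤ g ξ := le_trans hξsT.2 (hlad.2.1 ξs ξ hc)
      have : α ≤ y := by
        rw [hyeq]
        calc α = sSup (E ∩ Iio α) := hEα.symm
        _ ≤ sSup (E ∩ Iio (g ξ)) := csSup_le_csSup (bdd fun z hz => hz.2) hEαne
            (fun z hz => ⟨hz.1, lt_of_lt_of_le hz.2 hgξ⟩)
      exact absurd hyα (not_lt.2 this)
    rcases Ordinal.zero_or_succ_or_isSuccLimit ξs with h0 | ⟨σ, hσ⟩ | hlim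
    · -- ξs = 0 : impossible
      obtain ⟨y, hy⟩ := hne
      obtain ⟨ξ, hξ, hyeq, hy0⟩ := hy.1
      exact absurd (hidx y hy ξ hξ hyeq) (by rw [h0]; exact (zero_le : (0:O) ≤ ξ).not_gt)
    · -- successor : impossible
      exfalso
      have hσξs : σ < ξs := hσ ▸ Order.lt_succ σ
      have hbound : ∀ y ∈ drop lam g E ∩ Iio α, y ≤ sSup (E ∩ Iio (g σ)) := by
        rintro y hy
        obtain ⟨ξ, hξ, hyeq, hy0⟩ := hy.1
        have hξσ : ξ ≤ σ := by
          have := hidx y hy ξ hξ hyeq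
          rw [← hσ] at this
          exact Order.lt_succ_iff.1 this
        rw [hyeq]
        rcases eq_or_ne (sSup (E ∩ Iio (g ξ))) 0 with h | h
        · exact h ▸ zero_le
        · have hne2 : (E ∩ Iio (g ξ)).Nonempty := by
            by_contra hc
            rw [not_nonempty_iff_eq_empty] at hc
            exact h (by rw [hc, csSup_empty]; rfl)
          exact csSup_le_csSup (bdd fun z hz => hz.2) hne2
            (fun z hz => ⟨hz.1, lt_of_lt_of_le hz.2 (hlad.2.1 ξ σ hξσ)⟩)
      have : α ≤ sSup (E ∩ Iio (g σ)) := by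
        calc α = sSup (drop lam g E ∩ Iio α) := hs.symm
        _ ≤ sSup (E ∩ Iio (g σ)) := csSup_le (hne) hbound
      have : α ≤ g σ := le_trans this (sSup_le_of_forall fun a ha => (ha.2 : a < g σ).le)
      exact absurd (hleast σ hσξs) (not_lt.2 this)
    · -- limit case
      have hgξs : g ξs = α := by
        refine le_antisymm ?_ hξsT.2
        rw [hlad.2.2.2 ξs hlim]
        refine sSup_le_of_forall ?_
        rintro x ⟨ζ, hζ, rfl⟩
        exact (hleast ζ hζ).le
      exact ⟨ξs, hξsT.1, by rw [hgξs]; exact hEα.symm, h0α⟩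

attribute [local instance] Classical.propDecidable

def ladder (lam : Cardinal.{0}) (δ : O) : O → O :=
  if h : lam.IsRegular ∧ δ.cof = lam then (exists_ladder h.1 h.2).choose else fun _ => 0

lemma ladder_spec {lam : Cardinal.{0}} {δ : O} (hlam : lam.IsRegular) (hδ : δ.cof = lam) :
    IsLadder lam δ (ladder lam δ) := by
  rw [ladder, dif_pos ⟨hlam, hδ⟩]
  exact (exists_ladder hlam hδ).choose_spec

def dropL (lam : Cardinal.{0}) (E : Set O) (δ : O) : Set O := drop lam (ladder lam δ) E

def Works (lam κ : Cardinal.{0}) (S : Set O) (E : Set O) : Prop :=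
  ∀ D, IsClubIn D κ.ord →
    IsStatIn {δ | δ ∈ S ∧ δ ∈ accP E ∧ dropL lam E δ ⊆ D} κ.ord

def Bad (lam κ : Cardinal.{0}) (S : Set O) (E : Set O) : Prop :=
  ∃ D D' : Set O, IsClubIn D κ.ord ∧ IsClubIn D' κ.ord ∧
    ∀ δ, δ ∈ S → δ ∈ accP E → dropL lam E δ ⊆ D → δ ∉ D'

lemma bad_of_not_works {lam κ : Cardinal.{0}} {S E : Set O} (hSsub : S ⊆ Iio κ.ord)
    (hW : ¬ Works lam κ S E) : Bad lam κ S E := by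
  rw [Works] at hW
  push_neg at hW
  obtain ⟨D, hD, hT⟩ := hW
  rw [IsStatIn, not_and_or] at hT
  rcases hT with h | h
  · exact absurd (fun δ hδ => hSsub hδ.1) h
  · push_neg at h
    obtain ⟨D', hD', hne⟩ := h
    rw [← not_nonempty_iff_eq_empty] at hne
    rw [not_nonempty_iff_eq_empty] at hne
    refine ⟨D, D', hD, hD', fun δ h1 h2 h3 hδD' => ?_⟩
    exact absurd (show δ ∈ {δ | δ ∈ S ∧ δ ∈ accP E ∧ dropL lam E δ ⊆ D} ∩ D' from
      ⟨⟨h1, h2, h3⟩, hδD'⟩) (by rw [hne]; exact notMem_empty δ)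

def step (lam κ : Cardinal.{0}) (S : Set O) (E : Set O) : Set O :=
  if h : Bad lam κ S E then
    E ∩ h.choose ∩ h.choose_spec.choose ∩ (Iio κ.ord ∩ accP E)
  else E

lemma step_subset (lam κ : Cardinal.{0}) (S : Set O) (E : Set O) : step lam κ S E ⊆ E := by
  rw [step]
  split
  · exact fun x hx => hx.1.1.1
  · exact fun x hx => hx

lemma clubIn_inter {κo : O} (hκo : Order.IsSuccLimit κo) (hℵ : Cardinal.aleph0 < κo.cof)
    {A B : Set O} (hA : IsClubIn A κo) (hB : IsClubIn B κo) : IsClubIn (A ∩ B) κo := by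
  classical
  have h2 : ((2 : O)).card < κo.cof := by
    have : ((2 : O)).card = 2 := by simp
    rw [this]
    exact lt_trans (by exact_mod_cast Cardinal.nat_lt_aleph0 2) hℵ
  have hE : ∀ j < (2 : O), IsClubIn ((fun j => if j = 0 then A else B) j) κo := by
    intro j hj
    by_cases h : j = 0
    · simpa [h] using hA
    · simpa [h] using hB
  have := clubIn_biInter hκo h2 hℵ _ hE
  have heq : (Iio κo ∩ ⋂ j ∈ Iio (2 : O), (fun j => if j = 0 then A else B) j) = A ∩ B := by
    ext x
    simp only [mem_inter_iff, mem_iInter]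
    constructor
    · rintro ⟨hx, hI⟩
      have hA' := hI 0 (by norm_num)
      have hB' := hI 1 (by norm_num)
      simp only [if_pos rfl] at hA'
      simp only [one_ne_zero, if_false] at hB'
      exact ⟨hA', hB'⟩
    · rintro ⟨hxA, hxB⟩
      refine ⟨hA.1 hxA, fun j hj => ?_⟩
      by_cases h : j = 0
      · simpa [h] using hxA
      · simpa [h] using hxB
  rwa [heq] at this

lemma step_club {lam κ : Cardinal.{0}} {S : Set O} (hκo : Order.IsSuccLimit (κ.ord))
    (hℵ : Cardinal.aleph0 < κ.ord.cof) {E : Set O} (hE : IsClubIn E κ.ord) :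
    IsClubIn (step lam κ S E) κ.ord := by
  rw [step]
  split
  · rename_i h
    have hD := h.choose_spec.choose_spec.1
    have hD' := h.choose_spec.choose_spec.2.1
    have hacc : IsClubIn (Iio κ.ord ∩ accP E) κ.ord := clubIn_accP hκo hℵ hE
    exact clubIn_inter hκo hℵ (clubIn_inter hκo hℵ (clubIn_inter hκo hℵ hE hD) hD') hacc
  · exact hE

lemma step_spec {lam κ : Cardinal.{0}} {S E : Set O} (hbad : Bad lam κ S E)
    {δ : O} (hδS : δ ∈ S) (hδ : δ ∈ step lam κ S E) :
    δ ∈ accP E ∧ ¬ (dropL lam E δ ⊆ step lam κ S E) := by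
  rw [step, dif_pos hbad] at hδ ⊢
  refine ⟨hδ.2.2, fun hsub => ?_⟩
  exact (hbad.choose_spec.choose_spec.2.2 δ hδS hδ.2.2
    (fun x hx => (hsub hx).1.1.2)) hδ.1.2

def Fseq (lam κ : Cardinal.{0}) (S : Set O) : O → Set O := fun i =>
  Ordinal.limitRecOn i (Iio κ.ord) (fun _ ih => step lam κ S ih)
    (fun i _ ih => Iio κ.ord ∩ ⋂ j, ⋂ (h : j ∈ Iio i), ih j h)

lemma Fseq_zero (lam κ : Cardinal.{0}) (S : Set O) : Fseq lam κ S 0 = Iio κ.ord :=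
  Ordinal.limitRecOn_zero _ _ _

lemma Fseq_succ (lam κ : Cardinal.{0}) (S : Set O) (i : O) :
    Fseq lam κ S (Order.succ i) = step lam κ S (Fseq lam κ S i) :=
  Ordinal.limitRecOn_succ _ _ _ _

lemma Fseq_limit (lam κ : Cardinal.{0}) (S : Set O) {i : O} (h : Order.IsSuccLimit i) :
    Fseq lam κ S i = Iio κ.ord ∩ ⋂ j ∈ Iio i, Fseq lam κ S j :=
  Ordinal.limitRecOn_limit _ _ _ _ h

lemma Fseq_mono (lam κ : Cardinal.{0}) (S : Set O) :
    ∀ j i, i ≤ j → Fseq lam κ S j ⊆ Fseq lam κ S i := by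
  intro j
  induction j using Ordinal.induction with
  | h j IH =>
    intro i hij
    rcases eq_or_lt_of_le hij with rfl | hlt
    · exact fun x hx => hx
    rcases Ordinal.zero_or_succ_or_isSuccLimit j with rfl | ⟨k, rfl⟩ | hlim
    · exact absurd hlt (zero_le : (0:O) ≤ i).not_gt
    · rw [Fseq_succ]
      exact fun x hx =>
        IH k (Order.lt_succ k) i (Order.lt_succ_iff.1 hlt) (step_subset _ _ _ _ hx)
    · rw [Fseq_limit _ _ _ hlim]
      exact fun x hx => mem_iInter₂.1 hx.2 i hlt

lemma Fseq_club {lam κ : Cardinal.{0}} {S : Set O} (hκo : Order.IsSuccLimit (κ.ord))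
    (hℵ : Cardinal.aleph0 < κ.ord.cof) (hcof : κ.ord.cof = κ) :
    ∀ i, i.card < κ → IsClubIn (Fseq lam κ S i) κ.ord := by
  intro i
  induction i using Ordinal.induction with
  | h i IH =>
    intro hi
    rcases Ordinal.zero_or_succ_or_isSuccLimit i with rfl | ⟨k, rfl⟩ | hlim
    · rw [Fseq_zero]
      exact clubIn_Iio hκo
    · rw [Fseq_succ]
      exact step_club hκo hℵ (IH k (Order.lt_succ k)
        (lt_of_le_of_lt (Ordinal.card_le_card (Order.lt_succ k).le) hi))
    · rw [Fseq_limit _ _ _ hlim]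
      exact clubIn_biInter hκo (hcof.symm ▸ hi) hℵ _
        (fun j hj => IH j hj (lt_of_le_of_lt (Ordinal.card_le_card hj.le) hi))

lemma exists_works {lam κ : Cardinal.{0}} {S : Set O} (hlam : lam.IsRegular)
    (hκ : κ.IsRegular) (hlt : lam < κ) (hsucc : Order.succ lam < κ)
    (hSsub : S ⊆ Ecof κ.ord lam) (hS : IsStatIn S κ.ord) :
    ∃ i, i < (Order.succ lam).ord ∧ Works lam κ S (Fseq lam κ S i) := by
  classical
  set θ : O := (Order.succ lam).ord with hθ
  have hκo : Order.IsSuccLimit (κ.ord) := Cardinal.isSuccLimit_ord hκ.aleph0_le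
  have hcof : κ.ord.cof = κ := hκ.cof_eq
  have hℵ : Cardinal.aleph0 < κ.ord.cof := by
    rw [hcof]; exact lt_of_le_of_lt hlam.aleph0_le hlt
  have hlamS : (Order.succ lam).IsRegular := Cardinal.isRegular_succ hlam.aleph0_le
  have hθlim : Order.IsSuccLimit θ := Cardinal.isSuccLimit_ord hlamS.aleph0_le
  have hθcard : θ.card = Order.succ lam := Cardinal.card_ord _
  have hSIio : S ⊆ Iio κ.ord := fun δ h => (hSsub h).1
  have hclub : ∀ i ≤ θ, IsClubIn (Fseq lam κ S i) κ.ord := by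
    intro i hi
    refine Fseq_club hκo hℵ hcof i ?_
    exact lt_of_le_of_lt (hθcard ▸ Ordinal.card_le_card hi) hsucc
  by_contra hc
  push_neg at hc
  have hbad : ∀ i < θ, Bad lam κ S (Fseq lam κ S i) :=
    fun i hi => bad_of_not_works hSIio (hc i hi)
  set Estar : Set O := Iio κ.ord ∩ ⋂ j ∈ Iio θ, Fseq lam κ S j with hEstar
  have hEclub : IsClubIn Estar κ.ord := by
    refine clubIn_biInter hκo ?_ hℵ _ (fun j hj => hclub j hj.le)
    rw [hθcard, hcof]; exact hsucc
  obtain ⟨δ, hδS, hδE⟩ := hS.2 Estar hEclub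
  have hδκ : δ < κ.ord := (hSsub hδS).1
  have hδcof : δ.cof = lam := (hSsub hδS).2
  have glad : IsLadder lam δ (ladder lam δ) := ladder_spec hlam hδcof
  have hδF : ∀ i < θ, δ ∈ Fseq lam κ S i := fun i hi => mem_iInter₂.1 hδE.2 i hi
  have key : ∀ i < θ, δ ∈ accP (Fseq lam κ S i) ∧
      ¬ dropL lam (Fseq lam κ S i) δ ⊆ Fseq lam κ S (Order.succ i) := by
    intro i hi
    have hsi : Order.succ i < θ := hθlim.succ_lt hi
    have hδsi : δ ∈ Fseq lam κ S (Order.succ i) := hδF _ hsi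
    rw [Fseq_succ] at hδsi
    have hspec := step_spec (hbad i hi) hδS hδsi
    exact ⟨hspec.1, by rw [Fseq_succ]; exact hspec.2⟩
  set m : O → O → O := fun i ξ => sSup (Fseq lam κ S i ∩ Iio (ladder lam δ ξ)) with hm
  have hanti : ∀ ξ : O, ∀ i j : O, i ≤ j → m j ξ ≤ m i ξ := by
    intro ξ i j hij
    by_cases hn : (Fseq lam κ S j ∩ Iio (ladder lam δ ξ)).Nonempty
    · exact csSup_le_csSup (bdd fun y hy => hy.2) hn
        (fun x hx => ⟨Fseq_mono lam κ S j i hij hx.1, hx.2⟩)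
    · rw [not_nonempty_iff_eq_empty] at hn
      simp only [hm]
      rw [hn, csSup_empty]
      exact zero_le
  have hdec : ∀ i < θ, ∃ ξ < lam.ord, m (Order.succ i) ξ < m i ξ := by
    intro i hi
    obtain ⟨hacc, hnsub⟩ := key i hi
    obtain ⟨x, hxdrop, hxF⟩ := not_subset.1 hnsub
    obtain ⟨ξ, hξ, hxeq, hx0⟩ := hxdrop
    refine ⟨ξ, hξ, ?_⟩
    have hle : m (Order.succ i) ξ ≤ m i ξ := hanti ξ i (Order.succ i) (Order.lt_succ i).le
    rcases lt_or_eq_of_le hle with h | h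
    · exact h
    · exfalso
      have hsi : Order.succ i < θ := hθlim.succ_lt hi
      have hxm : x = m i ξ := hxeq
      have hx0' : 0 < m (Order.succ i) ξ := by rw [h, ← hxm]; exact hx0
      have hxdrop' : x ∈ dropL lam (Fseq lam κ S (Order.succ i)) δ :=
        ⟨ξ, hξ, (hxm.trans h.symm : x = m (Order.succ i) ξ), hx0⟩
      exact hxF (drop_subset (hclub _ hsi.le) glad hδκ hxdrop')
  have hmin : ∀ ξ : O, ∃ i, i < θ ∧ ∀ i' < θ, ¬ (m i' ξ < m i ξ) := by
    intro ξ
    set A : Set O := (fun i => m i ξ) '' Iio θ with hA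
    have hAne : A.Nonempty := ⟨m 0 ξ, 0, hθlim.pos, rfl⟩
    obtain ⟨i, hiθ, hieq⟩ := Ordinal.lt_wf.min_mem A hAne
    have hieq' : m i ξ = Ordinal.lt_wf.min A hAne := hieq
    refine ⟨i, hiθ, fun i' hi' hlt => ?_⟩
    rw [hieq'] at hlt
    exact Ordinal.lt_wf.not_lt_min A ⟨i', hi', rfl⟩ hlt
  choose I hIθ hImin using hmin
  set istar : O := sSup (I '' Iio lam.ord) with histar
  have histθ : istar < θ := by
    refine sSup_image_lt ?_ (fun j hj => hIθ j)
    rw [Cardinal.card_ord, hθ, (Cardinal.isRegular_succ hlam.aleph0_le).cof_eq]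
    exact Order.lt_succ lam
  have hsuccstar : Order.succ istar < θ := hθlim.succ_lt histθ
  obtain ⟨ξ, hξ, hdecξ⟩ := hdec istar histθ
  have hIle : I ξ ≤ istar :=
    le_csSup (⟨θ, by rintro y ⟨ζ, _, rfl⟩; exact (hIθ ζ).le⟩) ⟨ξ, hξ, rfl⟩
  have h1 : m istar ξ ≤ m (I ξ) ξ := hanti ξ (I ξ) istar hIle
  exact hImin ξ (Order.succ istar) hsuccstar (lt_of_lt_of_le hdecξ h1)

end SCG

/-- Shelah's club-guessing theorem: for infinite regular `λ < κ` with
`λ⁺ < κ` and stationary `S ⊆ E^κ_λ`, there is a C-sequence with `{δ ∈ S | C_δ ⊆ D}`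
stationary for every club `D`. -/
theorem statement6 (lam κ : Cardinal.{0}) (hlam : lam.IsRegular) (hκ : κ.IsRegular)
    (hlt : lam < κ) (hsucc : Order.succ lam < κ)
    (S : Set O) (hSsub : S ⊆ Ecof κ.ord lam) (hS : IsStatIn S κ.ord) :
    ∃ C : O → Set O, (∀ δ ∈ S, IsClubIn (C δ) δ) ∧
      ∀ D, IsClubIn D κ.ord → IsStatIn {δ ∈ S | C δ ⊆ D} κ.ord := by
  classical
  obtain ⟨i, hiθ, hW⟩ := SCG.exists_works hlam hκ hlt hsucc hSsub hS
  have hκo : Order.IsSuccLimit (κ.ord) := Cardinal.isSuccLimit_ord hκ.aleph0_le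
  have hcof : κ.ord.cof = κ := hκ.cof_eq
  have hℵ : Cardinal.aleph0 < κ.ord.cof := by
    rw [hcof]; exact lt_of_le_of_lt hlam.aleph0_le hlt
  have hicard : i.card < κ := lt_trans (Cardinal.lt_ord.1 hiθ) hsucc
  have hFclub : IsClubIn (SCG.Fseq lam κ S i) κ.ord := SCG.Fseq_club hκo hℵ hcof i hicard
  refine ⟨fun δ => if δ ∈ S ∧ δ ∈ accP (SCG.Fseq lam κ S i)
      then SCG.dropL lam (SCG.Fseq lam κ S i) δ
      else SCG.dropL lam (Iio κ.ord) δ, ?_, ?_⟩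
  · intro δ hδS
    beta_reduce
    have hδκ : δ < κ.ord := (hSsub hδS).1
    have hδcof : δ.cof = lam := (hSsub hδS).2
    have glad := SCG.ladder_spec hlam hδcof
    have hδal : Cardinal.aleph0 ≤ δ.cof := by rw [hδcof]; exact hlam.aleph0_le
    have hδlim : Order.IsSuccLimit δ := Ordinal.aleph0_le_cof.1 hδal
    by_cases h : δ ∈ S ∧ δ ∈ accP (SCG.Fseq lam κ S i)
    · rw [if_pos h]
      exact SCG.drop_club hFclub glad hδκ hδlim.pos h.2.2.2
    · rw [if_neg h]
      have heq : Iio κ.ord ∩ Iio δ = Iio δ :=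
        inter_eq_self_of_subset_right (Iio_subset_Iio hδκ.le)
      exact SCG.drop_club (SCG.clubIn_Iio hκo) glad hδκ hδlim.pos
        (by rw [heq]; exact SCG.sSup_Iio hδlim)
  · intro D hD
    refine ⟨fun δ hδ => (hSsub hδ.1).1, fun D' hD' => ?_⟩
    obtain ⟨δ, hδT, hδD'⟩ := (hW D hD).2 D' hD'
    refine ⟨δ, ⟨hδT.1, ?_⟩, hδD'⟩
    beta_reduce
    rw [if_pos ⟨hδT.1, hδT.2.1⟩]
    exact hδT.2.2
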